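/- Noise attenuation for low-pass stem kernels: if the DFT of the kernel K_k satisfies |K̂_k(ω)| ≤ (1+βk‖ω‖)^{−1−δ} for all frequencies ω on the grid, and the lattice sum obeys the radial comparison (1/(HW))∑_ω g(‖ω‖) ≤ A₂∫_ε^π r g(r) dr for radially nonincreasing g, then the per-pixel noise gain γ(k) = (1/(HW))∑_ω |K̂_k(ω)|² is bounded by C/k² for a constant C independent of k. -/

import Mathlib

open MeasureTheory
open scoped Real BigOperators

/-- Noise attenuation for low-pass stem kernels: under the radial low-pass envelope
`|K̂_k(ω)| ≤ (1+βk‖ω‖)^{−1−δ}` and the radial sum-to-integral comparison with constant `A₂`,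
the per-pixel noise gain `γ(k) = (1/(HW))∑_ω |K̂_k(ω)|²` satisfies `γ(k) ≤ C/k²` for a
constant `C = C(β,δ,A₂)` independent of `k` and of the grid. -/
theorem stmt_12 (β δ A₂ : ℝ) (hβ : 0 < β) (hδ : 0 < δ) (hA₂ : 0 < A₂) :
    ∃ C : ℝ, 0 < C ∧
      ∀ (k : ℝ), 1 ≤ k →
      ∀ (ι : Type) (_ : Fintype ι) (normω : ι → ℝ) (HW ε : ℝ) (Khat : ι → ℂ),
        0 < HW → 0 < ε → ε < π →
        (∀ i, 0 ≤ normω i) →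
        (∀ i, ‖Khat i‖ ≤ (1 + β * k * normω i) ^ (-(1 + δ))) →
        (∀ g : ℝ → ℝ, (∀ r, 0 ≤ g r) → AntitoneOn g (Set.Ici 0) →
          (1 / HW) * ∑ i, g (normω i) ≤ A₂ * ∫ r in Set.Ioc ε π, r * g r) →
        (1 / HW) * ∑ i, (‖Khat i‖) ^ 2 ≤ C / k ^ 2 := by
  refine ⟨A₂ / (2 * δ * β ^ 2), by positivity, ?_⟩
  intro k hk ι _ normω HW ε Khat hHW hε hεπ hn hK hcomp
  have hk0 : (0:ℝ) < k := lt_of_lt_of_le one_pos hk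
  set b : ℝ := β * k with hb
  have hb0 : 0 < b := mul_pos hβ hk0
  -- the dominating radial profile
  set g : ℝ → ℝ := fun r => (1 + b * max r 0) ^ (-(2 + 2 * δ)) with hg
  have hbase : ∀ r : ℝ, (0:ℝ) < 1 + b * max r 0 := by
    intro r
    have : 0 ≤ b * max r 0 := mul_nonneg hb0.le (le_max_right r 0)
    linarith
  have hgnonneg : ∀ r, 0 ≤ g r := fun r => (Real.rpow_pos_of_pos (hbase r) _).le
  have hganti : AntitoneOn g (Set.Ici 0) := by
    intro x hx y hy hxy
    simp only [hg]
    rw [max_eq_left (Set.mem_Ici.mp hx), max_eq_left (Set.mem_Ici.mp hy)]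
    have h1 : (0:ℝ) < 1 + b * x := by nlinarith [hx.out]
    have h2 : 1 + b * x ≤ 1 + b * y := by nlinarith
    rw [Real.rpow_neg h1.le, Real.rpow_neg (h1.trans_le h2).le]
    exact inv_anti₀ (Real.rpow_pos_of_pos h1 _)
      (Real.rpow_le_rpow h1.le h2 (by positivity))
  -- pointwise bound on the summand
  have hsum : ∀ i, (‖Khat i‖) ^ 2 ≤ g (normω i) := by
    intro i
    have hbpos : (0:ℝ) < 1 + b * normω i := by nlinarith [hn i]
    have h1 : (‖Khat i‖) ^ 2 ≤ ((1 + b * normω i) ^ (-(1 + δ))) ^ 2 :=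
      pow_le_pow_left₀ (norm_nonneg _) (hK i) 2
    refine h1.trans_eq ?_
    simp only [hg]
    rw [max_eq_left (hn i), ← Real.rpow_natCast ((1 + b * normω i) ^ (-(1 + δ))) 2,
      ← Real.rpow_mul hbpos.le]
    norm_num
    ring_nf
  have hstep1 : (1 / HW) * ∑ i, (‖Khat i‖) ^ 2
      ≤ (1 / HW) * ∑ i, g (normω i) := by
    apply mul_le_mul_of_nonneg_left (Finset.sum_le_sum fun i _ => hsum i)
    positivity
  have hstep2 := hcomp g hgnonneg hganti
  -- bound the integral
  set h : ℝ → ℝ := fun r => (1 / b) * (1 + b * r) ^ (-(1 + 2 * δ)) with hh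
  have hgcont : Continuous g := by
    apply Continuous.rpow_const
    · exact continuous_const.add (continuous_const.mul (continuous_id.max continuous_const))
    · exact fun x => Or.inl (ne_of_gt (hbase x))
  have hint1 : IntegrableOn (fun r => r * g r) (Set.Ioc ε π) := by
    exact (continuous_id.mul hgcont).integrableOn_Ioc
  have hhcont : ContinuousOn h (Set.Icc ε π) := by
    apply ContinuousOn.mul continuousOn_const
    apply ContinuousOn.rpow_const
    · exact (continuous_const.add (continuous_const.mul continuous_id)).continuousOn
    · intro x hx
      have : (0:ℝ) < 1 + b * x := by nlinarith [hx.1, hε]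
      exact Or.inl (ne_of_gt this)
  have hint2 : IntegrableOn h (Set.Ioc ε π) :=
    (hhcont.integrableOn_Icc).mono_set Set.Ioc_subset_Icc_self
  have hmono : (∫ r in Set.Ioc ε π, r * g r) ≤ ∫ r in Set.Ioc ε π, h r := by
    refine setIntegral_mono_on hint1 hint2 measurableSet_Ioc ?_
    intro r hr
    have hr0 : 0 < r := hε.trans hr.1
    have hX : (0:ℝ) < 1 + b * r := by nlinarith
    simp only [hg, hh, max_eq_left hr0.le]
    have hsplit : (1 + b * r) ^ (-(2 + 2 * δ))
        = (1 + b * r)⁻¹ * (1 + b * r) ^ (-(1 + 2 * δ)) := by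
      rw [← Real.rpow_neg_one (1 + b * r), ← Real.rpow_add hX]
      norm_num
      ring_nf
    rw [hsplit, ← mul_assoc]
    apply mul_le_mul_of_nonneg_right _ (Real.rpow_pos_of_pos hX _).le
    rw [← div_eq_mul_inv, div_le_div_iff₀ hX hb0]
    nlinarith
  -- compute/bound the remaining integral via an antiderivative
  have hF : ∀ r ∈ Set.uIcc ε π, HasDerivAt
      (fun r : ℝ => -(1 + b * r) ^ (-(2 * δ)) / (2 * δ * b))
      ((1 + b * r) ^ (-(1 + 2 * δ))) r := by
    intro r hr
    have hrε : ε ≤ r := by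
      rcases Set.mem_uIcc.mp hr with h | h
      · exact h.1
      · linarith [h.1, hεπ]
    have hX : (0:ℝ) < 1 + b * r := by nlinarith
    have hlin : HasDerivAt (fun r : ℝ => 1 + b * r) b r := by
      simpa using ((hasDerivAt_id r).const_mul b).const_add 1
    have hpow := hlin.rpow_const (p := -(2 * δ)) (Or.inl (ne_of_gt hX))
    have := (hpow.div_const (2 * δ * b)).neg
    refine (this.congr_deriv ?_).congr_of_eventuallyEq (Filter.Eventually.of_forall fun x => ?_)
    · rw [show -(2 * δ) - 1 = -(1 + 2 * δ) from by ring]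
      field_simp
    · show -(1 + b * x) ^ (-(2 * δ)) / (2 * δ * b) = -((1 + b * x) ^ (-(2 * δ)) / (2 * δ * b))
      rw [neg_div]
  have hIval : (∫ r in Set.Ioc ε π, (1 + b * r) ^ (-(1 + 2 * δ)))
      = (-(1 + b * π) ^ (-(2 * δ)) / (2 * δ * b)) - (-(1 + b * ε) ^ (-(2 * δ)) / (2 * δ * b)) := by
    rw [← intervalIntegral.integral_of_le hεπ.le]
    apply intervalIntegral.integral_eq_sub_of_hasDerivAt hF
    apply ContinuousOn.intervalIntegrable
    apply ContinuousOn.rpow_const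
    · exact (continuous_const.add (continuous_const.mul continuous_id)).continuousOn
    · intro x hx
      rw [Set.uIcc_of_le hεπ.le] at hx
      have : (0:ℝ) < 1 + b * x := by nlinarith [hx.1]
      exact Or.inl (ne_of_gt this)
  have hIbound : (∫ r in Set.Ioc ε π, (1 + b * r) ^ (-(1 + 2 * δ))) ≤ 1 / (2 * δ * b) := by
    rw [hIval]
    have h1 : (0:ℝ) ≤ (1 + b * π) ^ (-(2 * δ)) := by
      apply Real.rpow_nonneg
      nlinarith [Real.pi_pos]
    have h2 : (1 + b * ε) ^ (-(2 * δ)) ≤ 1 := by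
      apply Real.rpow_le_one_of_one_le_of_nonpos
      · nlinarith
      · linarith
    have hpos : (0:ℝ) < 2 * δ * b := by positivity
    rw [div_sub_div_same, div_le_div_iff₀ hpos hpos]
    nlinarith
  have hhint : (∫ r in Set.Ioc ε π, h r)
      = (1 / b) * ∫ r in Set.Ioc ε π, (1 + b * r) ^ (-(1 + 2 * δ)) := by
    simp only [hh]
    exact integral_const_mul _ _
  have hfinal : A₂ * (∫ r in Set.Ioc ε π, r * g r) ≤ A₂ / (2 * δ * β ^ 2) / k ^ 2 := by
    have : A₂ * (∫ r in Set.Ioc ε π, r * g r) ≤ A₂ * ((1 / b) * (1 / (2 * δ * b))) := by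
      apply mul_le_mul_of_nonneg_left _ hA₂.le
      calc (∫ r in Set.Ioc ε π, r * g r) ≤ ∫ r in Set.Ioc ε π, h r := hmono
        _ = (1 / b) * ∫ r in Set.Ioc ε π, (1 + b * r) ^ (-(1 + 2 * δ)) := hhint
        _ ≤ (1 / b) * (1 / (2 * δ * b)) := by
            apply mul_le_mul_of_nonneg_left hIbound (by positivity)
    refine this.trans_eq ?_
    simp only [hb]
    field_simp
  linarith [hstep1, hstep2]
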